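/- The Dougall-type series Ω(7/2, 1/2, 3/2, 5/2, 5/2) = ∑_{k=0}^∞ ((1/2)_k (3/2)_k (5/2)_k^2 / ((4)_k (3)_k (2)_k^2)) · (7/2 + 2k) converges and equals 16 − 1024/(9π²). -/

import Mathlib

open Filter Finset Real Topology

noncomputable def poch (x : ℝ) (n : ℕ) : ℝ := ∏ i ∈ Finset.range n, (x + i)

lemma poch_succ (x : ℝ) (n : ℕ) : poch x (n+1) = poch x n * (x + n) :=
  Finset.prod_range_succ _ _

lemma poch_zero (x : ℝ) : poch x 0 = 1 := rfl

lemma poch_pos {x : ℝ} (hx : 0 < x) (n : ℕ) : 0 < poch x n := by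
  induction n with
  | zero => norm_num [poch_zero]
  | succ n ih => rw [poch_succ]; positivity

lemma poch32 (n : ℕ) : poch (3/2) n = poch (1/2) n * (2*n+1) := by
  induction n with
  | zero => simp [poch_zero]
  | succ n ih => rw [poch_succ, poch_succ, ih]; push_cast; ring

lemma poch52 (n : ℕ) : poch (5/2) n = poch (1/2) n * (2*n+1) * (2*n+3) / 3 := by
  induction n with
  | zero => norm_num [poch_zero]
  | succ n ih => rw [poch_succ, poch_succ, ih]; push_cast; ring

lemma poch2 (n : ℕ) : poch 2 n = poch 1 n * (n+1) := by
  induction n with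
  | zero => simp [poch_zero]
  | succ n ih => rw [poch_succ, poch_succ, ih]; push_cast; ring

lemma poch3 (n : ℕ) : poch 3 n = poch 1 n * (n+1) * (n+2) / 2 := by
  induction n with
  | zero => norm_num [poch_zero]
  | succ n ih => rw [poch_succ, poch_succ, ih]; push_cast; ring

lemma poch4 (n : ℕ) : poch 4 n = poch 1 n * (n+1) * (n+2) * (n+3) / 6 := by
  induction n with
  | zero => norm_num [poch_zero]
  | succ n ih => rw [poch_succ, poch_succ, ih]; push_cast; ring

noncomputable def qq (n : ℕ) : ℝ := poch (1/2) n / poch 1 n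

lemma qq_pos (n : ℕ) : 0 < qq n :=
  div_pos (poch_pos (by norm_num) n) (poch_pos one_pos n)

lemma qq_succ (n : ℕ) : qq (n+1) = qq n * (2*n+1) / (2*n+2) := by
  have h1 : poch 1 n ≠ 0 := (poch_pos one_pos n).ne'
  have h2 : (1:ℝ) + n ≠ 0 := by positivity
  unfold qq
  rw [poch_succ, poch_succ]
  field_simp
  ring

-- closed form of partial sums
lemma psum (n : ℕ) :
    ∑ k ∈ Finset.range n, (poch (1/2) k * poch (3/2) k * poch (5/2) k ^ 2 /
        (poch 4 k * poch 3 k * poch 2 k ^ 2) * ((7:ℝ)/2 + 2 * k))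
    = 16 - (32/9) * qq n ^ 4 * (2*n+1)^3 * (2*n+3)^2 / (((n:ℝ)+1)^2 * ((n:ℝ)+2)) := by
  induction n with
  | zero => norm_num [qq, poch_zero]
  | succ n ih =>
    rw [Finset.sum_range_succ, ih, poch32, poch52, poch2, poch3, poch4, qq_succ]
    have h1 : poch 1 n ≠ 0 := (poch_pos one_pos n).ne'
    have hq : poch (1/2) n = qq n * poch 1 n := by
      unfold qq; field_simp
    rw [hq]
    have e1 : ((n:ℝ)+1) ≠ 0 := by positivity
    have e2 : ((n:ℝ)+2) ≠ 0 := by positivity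
    have e3 : ((n:ℝ)+3) ≠ 0 := by positivity
    have e4 : ((n:ℝ)+1+1) = ((n:ℝ)+2) := by ring
    have e5 : ((n:ℝ)+1+2) = ((n:ℝ)+3) := by ring
    have e6 : (2*(n:ℝ)+2) ≠ 0 := by positivity
    push_cast
    rw [e4, e5]
    field_simp
    ring

lemma wallis_qq (n : ℕ) :
    (∏ i ∈ range n, ((2 : ℝ) * i + 2) / (2 * i + 1) * ((2 * i + 2) / (2 * i + 3)))
      * (qq n ^ 2 * (2*n+1)) = 1 := by
  induction n with
  | zero => norm_num [qq, poch_zero]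
  | succ n ih =>
    rw [Finset.prod_range_succ, qq_succ]
    have e1 : (2*(n:ℝ)+1) ≠ 0 := by positivity
    have e2 : (2*(n:ℝ)+2) ≠ 0 := by positivity
    have e3 : (2*(n:ℝ)+3) ≠ 0 := by positivity
    push_cast
    field_simp at ih ⊢
    linear_combination (2*(n:ℝ)+3) * ih

theorem stmt5 :
    HasSum (fun k : ℕ =>
      poch (1/2) k * poch (3/2) k * poch (5/2) k ^ 2 /
        (poch 4 k * poch 3 k * poch 2 k ^ 2) * ((7:ℝ)/2 + 2 * k))
      (16 - 1024 / (9 * Real.pi ^ 2)) := by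
  have hnn : ∀ k : ℕ, 0 ≤ poch (1/2) k * poch (3/2) k * poch (5/2) k ^ 2 /
        (poch 4 k * poch 3 k * poch 2 k ^ 2) * ((7:ℝ)/2 + 2 * k) := by
    intro k
    have h1 := poch_pos (show (0:ℝ) < 1/2 by norm_num) k
    have h2 := poch_pos (show (0:ℝ) < 3/2 by norm_num) k
    have h3 := poch_pos (show (0:ℝ) < 5/2 by norm_num) k
    have h4 := poch_pos (show (0:ℝ) < 4 by norm_num) k
    have h5 := poch_pos (show (0:ℝ) < 3 by norm_num) k
    have h6 := poch_pos (show (0:ℝ) < 2 by norm_num) k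
    have h7 : (0:ℝ) < (7:ℝ)/2 + 2 * k := by positivity
    positivity
  rw [hasSum_iff_tendsto_nat_of_nonneg hnn]
  simp only [psum]
  -- auxiliary: (n+b)/(n+c) → 1
  have hfrac : ∀ b c : ℝ, Tendsto (fun n : ℕ => ((n:ℝ)+b)/((n:ℝ)+c)) atTop (𝓝 1) := by
    intro b c
    have hc : Tendsto (fun n : ℕ => (n:ℝ)+c) atTop atTop :=
      tendsto_atTop_add_const_right _ c tendsto_natCast_atTop_atTop
    have h0 : Tendsto (fun n : ℕ => (b-c)/((n:ℝ)+c)) atTop (𝓝 0) :=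
      Tendsto.div_atTop tendsto_const_nhds hc
    have h1 : Tendsto (fun n : ℕ => 1 + (b-c)/((n:ℝ)+c)) atTop (𝓝 1) := by
      simpa using tendsto_const_nhds.add h0
    refine h1.congr' ?_
    filter_upwards [hc.eventually_gt_atTop 0] with n hn
    field_simp
    ring
  set W : ℕ → ℝ := fun n => ∏ i ∈ range n, ((2 : ℝ) * i + 2) / (2 * i + 1) * ((2 * i + 2) / (2 * i + 3)) with hWdef
  have hW : Tendsto W atTop (𝓝 (π/2)) := Real.tendsto_prod_pi_div_two
  have hWne : ∀ n, W n ≠ 0 := by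
    intro n
    intro h
    have := wallis_qq n
    rw [hWdef] at h
    simp only [h, zero_mul] at this
    norm_num at this
  have hx : ∀ n, qq n ^ 2 * (2*(n:ℝ)+1) = (W n)⁻¹ := by
    intro n
    have h := wallis_qq n
    exact eq_inv_of_mul_eq_one_left (by rw [mul_comm]; exact h)
  have hxlim : Tendsto (fun n => qq n ^ 2 * (2*(n:ℝ)+1)) atTop (𝓝 (2/π)) := by
    have : Tendsto (fun n => (W n)⁻¹) atTop (𝓝 ((π/2)⁻¹)) :=
      hW.inv₀ (by simp [Real.pi_ne_zero])
    have h2 : ((π:ℝ)/2)⁻¹ = 2/π := by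
      rw [inv_div]
    rw [h2] at this
    exact this.congr (fun n => (hx n).symm)
  have hmain : Tendsto (fun n : ℕ =>
      16 - 32/9 * (qq n ^ 2 * (2*(n:ℝ)+1))^2 *
        (((n:ℝ)+1/2)/((n:ℝ)+1) * (((n:ℝ)+3/2)/((n:ℝ)+1)) * (((n:ℝ)+3/2)/((n:ℝ)+2))) * 8)
      atTop (𝓝 (16 - 32/9 * (2/π)^2 * (1*1*1) * 8)) := by
    exact tendsto_const_nhds.sub ((((tendsto_const_nhds.mul (hxlim.pow 2)).mul
      (((hfrac (1/2) 1).mul (hfrac (3/2) 1)).mul (hfrac (3/2) 2))).mul tendsto_const_nhds))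
  have hval : 16 - 32/9 * ((2:ℝ)/π)^2 * (1*1*1) * 8 = 16 - 1024 / (9 * π ^ 2) := by
    have : (π:ℝ) ≠ 0 := Real.pi_ne_zero
    field_simp
    ring
  rw [hval] at hmain
  refine hmain.congr (fun n => ?_)
  have e1 : ((n:ℝ)+1) ≠ 0 := by positivity
  have e2 : ((n:ℝ)+2) ≠ 0 := by positivity
  field_simp
  ring
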